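/- Let M = (S, ρ) be a matroid scheme. Then its poset of flats F(M), with the rank function inherited from ρ, is a geometric poset: it is bounded below and ranked, every maximal interval of F(M) is a geometric lattice, and for every flat x, every set A of atoms of F(M), and every y that is a minimal upper bound of A in F(M) with ρ(x) < ρ(y) = |A|, there exists a ∈ A with a ≰ x and a and x having a common upper bound in F(M). -/

import Mathlib

/-- The set of minimal upper bounds of `x` and `y` (denoted `x ∨ y` in the paper). -/
def mub {S : Type*} [PartialOrder S] (x y : S) : Set S :=
  {u | x ≤ u ∧ y ≤ u ∧ ∀ v, x ≤ v → y ≤ v → v ≤ u → v = u}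

/-- The set of maximal lower bounds of `x` and `y` (denoted `x ∧ y` in the paper). -/
def mlb {S : Type*} [PartialOrder S] (x y : S) : Set S :=
  {l | l ≤ x ∧ l ≤ y ∧ ∀ m, m ≤ x → m ≤ y → l ≤ m → m = l}

/-- The set of minimal upper bounds of a subset `T`. -/
def mubSet {S : Type*} [PartialOrder S] (T : Set S) : Set S :=
  {u | (∀ t ∈ T, t ≤ u) ∧ ∀ v, (∀ t ∈ T, t ≤ v) → v ≤ u → v = u}

/-- The number of atoms below `x`, i.e. `|x|`, the rank of `x` in a simplicial poset. -/
noncomputable def natRank {S : Type*} [PartialOrder S] [OrderBot S] (x : S) : ℕ :=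
  Nat.card {a : S // IsAtom a ∧ a ≤ x}

/-- A finite bounded-below poset is simplicial if every lower interval is isomorphic to
the Boolean lattice of subsets of the set of atoms below. -/
def IsSimplicialPoset (S : Type*) [PartialOrder S] [OrderBot S] [Fintype S] : Prop :=
  ∀ x : S, Nonempty (Set.Iic x ≃o Set {a : S // IsAtom a ∧ a ≤ x})

/-- A matroid scheme: a rank function `ρ` on a finite simplicial poset `S`
satisfying (M1)–(M5). -/
structure IsMatroidScheme {S : Type*} [PartialOrder S] [OrderBot S] [Fintype S]
    (ρ : S → ℕ) : Prop where
  simplicial : IsSimplicialPoset S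
  M1 : ∀ x : S, ρ x ≤ natRank x
  M2 : ∀ ⦃x y : S⦄, x ≤ y → ρ x ≤ ρ y
  M3 : ∀ x y u l : S, u ∈ mub x y → l ∈ mlb x y → ρ u + ρ l ≤ ρ x + ρ y
  M4 : ∀ x y l : S, l ∈ mlb x y → ρ x = ρ l → (mub x y).Nonempty
  M5 : ∀ x y : S, ρ x < ρ y →
    ∃ a : S, IsAtom a ∧ a ≤ y ∧ ¬ a ≤ x ∧ (mub x a).Nonempty

/-- `cl` is the closure operator of a matroid scheme `(S, ρ)`:
`cl x` is the greatest element above `x` of the same rank. -/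
def IsClosureFun {S : Type*} [PartialOrder S] (ρ : S → ℕ) (cl : S → S) : Prop :=
  ∀ x : S, x ≤ cl x ∧ ρ (cl x) = ρ x ∧ ∀ y : S, x ≤ y → ρ y = ρ x → y ≤ cl x

/-- The bases of a matroid scheme: the maximal independent elements. -/
def Bases {S : Type*} [PartialOrder S] [OrderBot S] (ρ : S → ℕ) : Set S :=
  {x | ρ x = natRank x ∧ ∀ w, ρ w = natRank w → x ≤ w → w = x}

/-- The circuits of a matroid scheme: the minimal dependent elements. -/
def Circuits {S : Type*} [PartialOrder S] [OrderBot S] (ρ : S → ℕ) : Set S :=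
  {x | ρ x < natRank x ∧ ∀ y, ρ y < natRank y → y ≤ x → y = x}

/-- `c` is the complement `x ∖ a` of `a` in the Boolean lattice `S_{≤ x}`. -/
def IsComplementIn {S : Type*} [PartialOrder S] [OrderBot S] (c a x : S) : Prop :=
  c ≤ x ∧ a ≤ x ∧ (∀ l : S, l ≤ c → l ≤ a → l = ⊥) ∧
    (∀ u : S, u ≤ x → c ≤ u → a ≤ u → u = x)

/-- The rank of a matroid scheme: the common value of `ρ` on maximal elements
(equal to the maximum value of `ρ`). -/
noncomputable def schemeRank {S : Type*} [Fintype S] (ρ : S → ℕ) : ℕ :=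
  sSup (Set.range ρ)

/-- The Tutte polynomial of a matroid scheme, as a two-variable integer function. -/
noncomputable def tutte {S : Type*} [PartialOrder S] [OrderBot S] [Fintype S]
    (ρ : S → ℕ) (x y : ℤ) : ℤ :=
  ∑ w : S, (x - 1) ^ (schemeRank ρ - ρ w) * (y - 1) ^ (natRank w - ρ w)

/-- An element of a poset is an order-atom if it covers a global minimum. -/
def OrdAtom {P : Type*} [PartialOrder P] (a : P) : Prop :=
  ∃ b : P, (∀ z : P, b ≤ z) ∧ b ⋖ a

/-- A partial order is a geometric lattice: it is bounded below, every pair has a least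
upper bound and greatest lower bound, it is atomistic, and it is (upper) semimodular. -/
def IsGeomLatOrder (P : Type*) [PartialOrder P] : Prop :=
  (∃ b : P, ∀ x : P, b ≤ x) ∧
  (∀ x y : P, ∃ u : P, IsLUB {x, y} u) ∧
  (∀ x y : P, ∃ l : P, IsGLB {x, y} l) ∧
  (∀ x : P, IsLUB {a : P | OrdAtom a ∧ a ≤ x} x) ∧
  (∀ x y m j : P, IsGLB {x, y} m → IsLUB {x, y} j → m ⋖ x → y ⋖ j)

/-- A geometric poset: a finite bounded-below poset with rank function `rk`
satisfying (G1) and (G2). -/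
def IsGeometricPoset (P : Type*) [PartialOrder P] [OrderBot P] [Fintype P]
    (rk : P → ℕ) : Prop :=
  rk ⊥ = 0 ∧
  (∀ ⦃x y : P⦄, x ≤ y → rk x ≤ rk y) ∧
  (∀ x y : P, x ⋖ y → rk y = rk x + 1) ∧
  (∀ m : P, IsMax m → IsGeomLatOrder (Set.Iic m)) ∧
  (∀ (x : P) (A : Set P), (∀ a ∈ A, IsAtom a) →
    ∀ y ∈ mubSet A, rk x < rk y → rk y = Nat.card A →
      ∃ a ∈ A, ¬ a ≤ x ∧ ∃ w : P, x ≤ w ∧ a ≤ w)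

set_option linter.unusedSectionVars false

section MSAux
variable {S : Type*} [PartialOrder S] [OrderBot S] [Fintype S] {ρ : S → ℕ} {cl : S → S}

lemma ms_natRank_bot : natRank (⊥ : S) = 0 := by
  haveI : IsEmpty {a : S // IsAtom a ∧ a ≤ ⊥} :=
    ⟨fun a => a.2.1.1 (le_bot_iff.mp a.2.2)⟩
  exact Nat.card_of_isEmpty

lemma ms_natRank_atom {a : S} (ha : IsAtom a) : natRank a = 1 := by
  have hu : Unique {b : S // IsAtom b ∧ b ≤ a} := by
    refine ⟨⟨⟨a, ha, le_rfl⟩⟩, ?_⟩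
    rintro ⟨b, hb, hba⟩
    ext
    rcases hba.lt_or_eq with hlt | he
    · exact absurd (ha.2 b hlt) hb.1
    · exact he
  have : Nonempty {b : S // IsAtom b ∧ b ≤ a} := ⟨hu.default⟩
  have : Subsingleton {b : S // IsAtom b ∧ b ≤ a} := hu.instSubsingleton
  exact Nat.card_unique

lemma ms_rho_bot (h : IsMatroidScheme ρ) : ρ (⊥ : S) = 0 :=
  Nat.le_zero.mp (ms_natRank_bot (S := S) ▸ h.M1 ⊥)

lemma ms_rho_atom (h : IsMatroidScheme ρ) {p : S} (hp : IsAtom p) : ρ p ≤ 1 :=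
  ms_natRank_atom hp ▸ h.M1 p

lemma ms_bot_mlb {x p : S} (hp : IsAtom p) (hpx : ¬ p ≤ x) : (⊥ : S) ∈ mlb x p := by
  refine ⟨bot_le, bot_le, fun m hmx hmp _ => ?_⟩
  rcases hmp.lt_or_eq with h' | h'
  · exact hp.2 m h'
  · exact absurd (h' ▸ hmx) hpx

lemma ms_exists_mlb_ge (x y l0 : S) (h1 : l0 ≤ x) (h2 : l0 ≤ y) :
    ∃ l ∈ mlb x y, l0 ≤ l := by
  classical
  obtain ⟨l, hl, hmax⟩ := (Finset.univ.filter
    (fun l : S => l ≤ x ∧ l ≤ y ∧ l0 ≤ l)).exists_maximal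
    ⟨l0, by simp [h1, h2]⟩
  simp only [Finset.mem_filter, Finset.mem_univ, true_and] at hl hmax
  refine ⟨l, ⟨hl.1, hl.2.1, fun m hmx hmy hlm => ?_⟩, hl.2.2⟩
  by_contra hne
  exact hne (le_antisymm (hmax ⟨hmx, hmy, le_trans hl.2.2 hlm⟩ hlm) hlm)

lemma ms_exists_mub_le {x p w : S} (hx : x ≤ w) (hp : p ≤ w) :
    ∃ u ∈ mub x p, u ≤ w := by
  classical
  obtain ⟨u, hu, hmin⟩ := (Finset.univ.filter
    (fun u : S => x ≤ u ∧ p ≤ u ∧ u ≤ w)).exists_minimal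
    ⟨w, by simp [hx, hp]⟩
  simp only [Finset.mem_filter, Finset.mem_univ, true_and] at hu hmin
  refine ⟨u, ⟨hu.1, hu.2.1, fun v hvx hvp hvu => ?_⟩, hu.2.2⟩
  by_contra hne
  exact hne (le_antisymm hvu (hmin ⟨hvx, hvp, le_trans hvu hu.2.2⟩ hvu))

lemma ms_cl_mono (h : IsMatroidScheme ρ) (hcl : IsClosureFun ρ cl) {x z : S}
    (hxz : x ≤ z) : cl x ≤ cl z := by
  obtain ⟨l, hl, hxl⟩ := ms_exists_mlb_ge (cl x) z x (hcl x).1 hxz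
  have hrl : ρ l = ρ x := le_antisymm ((hcl x).2.1 ▸ h.M2 hl.1) (h.M2 hxl)
  obtain ⟨u, hu⟩ := h.M4 (cl x) z l hl (by rw [hrl, (hcl x).2.1])
  have h3 := h.M3 (cl x) z u l hu hl
  have hru : ρ u = ρ z := by
    have := h.M2 hu.2.1
    rw [(hcl x).2.1, hrl] at h3
    omega
  exact le_trans hu.1 ((hcl z).2.2 u hu.2.1 hru)

lemma ms_cl_cl (hcl : IsClosureFun ρ cl) (x : S) : cl (cl x) = cl x :=
  le_antisymm ((hcl x).2.2 _ (le_trans (hcl x).1 (hcl (cl x)).1)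
    (by rw [(hcl (cl x)).2.1, (hcl x).2.1])) (hcl (cl x)).1

lemma ms_flat_eq (h : IsMatroidScheme ρ) (hcl : IsClosureFun ρ cl) {x y : S}
    (hx : cl x = x) (hxy : x ≤ y) (hr : ρ y ≤ ρ x) : y = x := by
  have : ρ y = ρ x := le_antisymm hr (h.M2 hxy)
  have := (hcl x).2.2 y hxy this
  rw [hx] at this
  exact le_antisymm this hxy

lemma ms_bflat_le (h : IsMatroidScheme ρ) (hcl : IsClosureFun ρ cl) {z : S}
    (hz : cl z = z) : cl (⊥ : S) ≤ z := by
  have := ms_cl_mono h hcl (bot_le : (⊥ : S) ≤ z)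
  rwa [hz] at this

lemma ms_rho_bflat (h : IsMatroidScheme ρ) (hcl : IsClosureFun ρ cl) :
    ρ (cl (⊥ : S)) = 0 := by rw [(hcl ⊥).2.1, ms_rho_bot h]

lemma ms_mub_step (h : IsMatroidScheme ρ) (hcl : IsClosureFun ρ cl) {x p u : S}
    (hx : cl x = x) (hp : IsAtom p) (hpx : ¬ p ≤ x) (hu : u ∈ mub x p) :
    ρ u = ρ x + 1 := by
  have h3 := h.M3 x p u ⊥ hu (ms_bot_mlb hp hpx)
  rw [ms_rho_bot h] at h3
  have hra := ms_rho_atom h hp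
  have hlt : ρ x < ρ u := by
    rcases lt_or_ge (ρ x) (ρ u) with h' | h'
    · exact h'
    · exact absurd (ms_flat_eq h hcl hx hu.1 h' ▸ hu.2.1) hpx
  omega

lemma ms_covBy_rho (h : IsMatroidScheme ρ) (hcl : IsClosureFun ρ cl)
    {x y : {x : S // cl x = x}} (hxy : x ⋖ y) : ρ y.val = ρ x.val + 1 := by
  have hlt : x.val < y.val := Subtype.coe_lt_coe.mpr hxy.lt
  have hr : ρ x.val < ρ y.val := by
    rcases lt_or_ge (ρ x.val) (ρ y.val) with h' | h'
    · exact h'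
    · exact absurd (ms_flat_eq h hcl x.2 hlt.le h') hlt.ne'
  obtain ⟨p, hp, hpy, hpx, -⟩ := h.M5 x.val y.val hr
  obtain ⟨u, hu, huy⟩ := ms_exists_mub_le hlt.le hpy
  have hru : ρ u = ρ x.val + 1 := ms_mub_step h hcl x.2 hp hpx hu
  have hzy : (⟨cl u, ms_cl_cl hcl u⟩ : {x : S // cl x = x}) ≤ y := by
    have := ms_cl_mono h hcl huy
    rw [y.2] at this
    exact this
  have hxz : x < (⟨cl u, ms_cl_cl hcl u⟩ : {x : S // cl x = x}) := by
    refine lt_of_le_of_ne (Subtype.coe_le_coe.mp ?_) ?_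
    · exact le_trans hu.1 (hcl u).1
    · intro he
      exact hpx (he ▸ (le_trans hu.2.1 (hcl u).1 : p ≤ cl u))
  have hzy' : (⟨cl u, ms_cl_cl hcl u⟩ : {x : S // cl x = x}) = y := by
    by_contra hne
    exact hxy.2 hxz (lt_of_le_of_ne hzy hne)
  calc ρ y.val = ρ (cl u) := by rw [← hzy']
  _ = ρ u := (hcl u).2.1
  _ = ρ x.val + 1 := hru

lemma ms_rank1_covby (h : IsMatroidScheme ρ) (hcl : IsClosureFun ρ cl) {a : S}
    (ha : cl a = a) (hra : ρ a = 1) :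
    (⟨cl ⊥, ms_cl_cl hcl ⊥⟩ : {x : S // cl x = x}) ⋖ ⟨a, ha⟩ := by
  have hble : cl (⊥ : S) ≤ a := ms_bflat_le h hcl ha
  have hrb : ρ (cl (⊥ : S)) = 0 := ms_rho_bflat h hcl
  constructor
  · refine lt_of_le_of_ne (Subtype.coe_le_coe.mp hble) ?_
    intro he
    have hva : cl (⊥ : S) = a := congrArg Subtype.val he
    rw [← hva, hrb] at hra
    exact absurd hra (by omega)
  · rintro ⟨c, hc⟩ h1 h2
    have h1' : cl (⊥ : S) < c := Subtype.coe_lt_coe.mpr h1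
    have h2' : c < a := Subtype.coe_lt_coe.mpr h2
    have hrc : ρ c ≤ 1 := hra ▸ h.M2 h2'.le
    rcases Nat.le_one_iff_eq_zero_or_eq_one.mp hrc with h0 | h1''
    · have : c ≤ cl (⊥ : S) := (hcl ⊥).2.2 c bot_le (by rw [h0, ms_rho_bot h])
      exact absurd this (not_le_of_gt h1')
    · have : a ≤ cl c := (hcl c).2.2 a h2'.le (by rw [hra, h1''])
      rw [hc] at this
      exact absurd this (not_le_of_gt h2')

lemma ms_exists_atom_cl (h : IsMatroidScheme ρ) (hcl : IsClosureFun ρ cl) {a : S}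
    (ha : cl a = a) (hra : ρ a = 1) : ∃ p, IsAtom p ∧ p ≤ a ∧ cl p = a := by
  obtain ⟨p, hp, hpa, hpb, -⟩ := h.M5 (cl ⊥) a (by rw [ms_rho_bflat h hcl, hra]; omega)
  have hrp : ρ p = 1 := by
    have := ms_rho_atom h hp
    rcases Nat.le_one_iff_eq_zero_or_eq_one.mp this with h0 | h1
    · exact absurd ((hcl ⊥).2.2 p bot_le (by rw [h0, ms_rho_bot h])) hpb
    · exact h1
  refine ⟨p, hp, hpa, le_antisymm (by rw [← ha]; exact ms_cl_mono h hcl hpa)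
    ((hcl p).2.2 a hpa (by rw [hra, hrp]))⟩

lemma ms_iso_bot {w : S} {X : Type*} (e : Set.Iic w ≃o Set X) :
    e ⟨⊥, bot_le⟩ = ∅ := by
  have : ∀ s : Set X, e ⟨⊥, bot_le⟩ ⊆ s := by
    intro s
    have h1 : (⟨⊥, bot_le⟩ : Set.Iic w) ≤ e.symm s := bot_le
    have := e.monotone h1
    rwa [e.apply_symm_apply] at this
  exact Set.subset_empty_iff.mp (this ∅)

lemma ms_iso_atom {w : S} {X : Type*} (e : Set.Iic w ≃o Set X) {q : S}
    (hq : IsAtom q) (hqw : q ≤ w) : ∃ t, e ⟨q, hqw⟩ = {t} := by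
  have hne : e ⟨q, hqw⟩ ≠ ∅ := by
    intro h0
    have : (⟨q, hqw⟩ : Set.Iic w) = ⟨⊥, bot_le⟩ := e.injective (by rw [h0, ms_iso_bot])
    exact hq.1 (congrArg Subtype.val this)
  obtain ⟨t, ht⟩ := Set.nonempty_iff_ne_empty.mpr hne
  refine ⟨t, ?_⟩
  have hsub : ({t} : Set X) ⊆ e ⟨q, hqw⟩ := Set.singleton_subset_iff.mpr ht
  have h1 : e.symm {t} ≤ ⟨q, hqw⟩ := by
    have := e.symm.monotone hsub
    rwa [e.symm_apply_apply] at this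
  have h1' : (e.symm {t} : S) ≤ q := h1
  rcases h1'.lt_or_eq with hlt | he
  · have : (e.symm {t} : S) = ⊥ := hq.2 _ hlt
    have h2 : e.symm {t} = (⟨⊥, bot_le⟩ : Set.Iic w) := Subtype.ext this
    have : ({t} : Set X) = ∅ := by
      rw [← ms_iso_bot e, ← h2, e.apply_symm_apply]
    simp at this
  · have h2 : e.symm {t} = (⟨q, hqw⟩ : Set.Iic w) := Subtype.ext he
    rw [← h2, e.apply_symm_apply]

lemma ms_simp_lub (hs : IsSimplicialPoset S) {x y w : S} (hx : x ≤ w) (hy : y ≤ w) :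
    ∃ j, x ≤ j ∧ y ≤ j ∧ j ≤ w ∧ ∀ z, z ≤ w → x ≤ z → y ≤ z → j ≤ z := by
  obtain ⟨e⟩ := hs w
  set j : Set.Iic w := e.symm (e ⟨x, hx⟩ ∪ e ⟨y, hy⟩) with hj
  refine ⟨j.val, ?_, ?_, j.2, ?_⟩
  · have := e.symm.monotone (Set.subset_union_left (s := e ⟨x, hx⟩) (t := e ⟨y, hy⟩))
    rwa [e.symm_apply_apply] at this
  · have := e.symm.monotone (Set.subset_union_right (s := e ⟨x, hx⟩) (t := e ⟨y, hy⟩))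
    rwa [e.symm_apply_apply] at this
  · intro z hzw hxz hyz
    have h1 : e ⟨x, hx⟩ ⊆ e ⟨z, hzw⟩ :=
      e.monotone (show (⟨x, hx⟩ : Set.Iic w) ≤ ⟨z, hzw⟩ from hxz)
    have h2 : e ⟨y, hy⟩ ⊆ e ⟨z, hzw⟩ :=
      e.monotone (show (⟨y, hy⟩ : Set.Iic w) ≤ ⟨z, hzw⟩ from hyz)
    have := e.symm.monotone (Set.union_subset h1 h2)
    rwa [e.symm_apply_apply] at this

lemma ms_simp_glb (hs : IsSimplicialPoset S) {x y w : S} (hx : x ≤ w) (hy : y ≤ w) :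
    ∃ l, l ≤ x ∧ l ≤ y ∧ ∀ z, z ≤ x → z ≤ y → z ≤ l := by
  obtain ⟨e⟩ := hs w
  set l : Set.Iic w := e.symm (e ⟨x, hx⟩ ∩ e ⟨y, hy⟩) with hl
  refine ⟨l.val, ?_, ?_, ?_⟩
  · have := e.symm.monotone (Set.inter_subset_left (s := e ⟨x, hx⟩) (t := e ⟨y, hy⟩))
    rwa [e.symm_apply_apply] at this
  · have := e.symm.monotone (Set.inter_subset_right (s := e ⟨x, hx⟩) (t := e ⟨y, hy⟩))
    rwa [e.symm_apply_apply] at this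
  · intro z hzx hzy
    have hzw : z ≤ w := le_trans hzx hx
    have h1 : e ⟨z, hzw⟩ ⊆ e ⟨x, hx⟩ :=
      e.monotone (show (⟨z, hzw⟩ : Set.Iic w) ≤ ⟨x, hx⟩ from hzx)
    have h2 : e ⟨z, hzw⟩ ⊆ e ⟨y, hy⟩ :=
      e.monotone (show (⟨z, hzw⟩ : Set.Iic w) ≤ ⟨y, hy⟩ from hzy)
    have := e.symm.monotone (Set.subset_inter h1 h2)
    rwa [e.symm_apply_apply] at this

lemma ms_cov_lift {P : Type*} [PartialOrder P] {m : P} {a b : ↥(Set.Iic m)}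
    (hab : a ⋖ b) : a.val ⋖ b.val := by
  refine ⟨Subtype.coe_lt_coe.mpr hab.lt, ?_⟩
  intro c h1 h2
  exact hab.2 (show a < ⟨c, le_trans h2.le b.2⟩ from Subtype.coe_lt_coe.mp h1)
    (Subtype.coe_lt_coe.mp h2)

lemma ms_cov_mk {P : Type*} [PartialOrder P] {m : P} {a b : ↥(Set.Iic m)}
    (h1 : a.val ⋖ b.val) : a ⋖ b :=
  ⟨Subtype.coe_lt_coe.mp h1.lt, fun _ hc1 hc2 =>
    h1.2 (Subtype.coe_lt_coe.mpr hc1) (Subtype.coe_lt_coe.mpr hc2)⟩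

end MSAux

/-- Theorem 9.5 (first half): the poset of flats of a matroid scheme, with the rank
function inherited from `ρ`, is a geometric poset: it is bounded below and ranked,
every maximal interval is a geometric lattice (G1), and the exchange condition (G2)
holds for minimal upper bounds of sets of atoms of the poset of flats. -/


theorem statement15 {S : Type*} [PartialOrder S] [OrderBot S] [Fintype S]
    (ρ : S → ℕ) (h : IsMatroidScheme ρ) (cl : S → S) (hcl : IsClosureFun ρ cl) :
    (∃ b : {x : S // cl x = x}, ∀ z : {x : S // cl x = x}, b ≤ z) ∧
    (∀ x y : {x : S // cl x = x}, x ≤ y → ρ x.val ≤ ρ y.val) ∧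
    (∀ x y : {x : S // cl x = x}, x ⋖ y → ρ y.val = ρ x.val + 1) ∧
    (∀ m : {x : S // cl x = x}, IsMax m → IsGeomLatOrder (Set.Iic m)) ∧
    (∀ (x : {x : S // cl x = x}) (A : Set {x : S // cl x = x}),
      (∀ a ∈ A, OrdAtom a) →
      ∀ y ∈ mubSet A, ρ x.val < ρ y.val → ρ y.val = Nat.card A →
        ∃ a ∈ A, ¬ a ≤ x ∧ ∃ w : {x : S // cl x = x}, x ≤ w ∧ a ≤ w) := by
  classical
  have hbot : ∀ z : {x : S // cl x = x},
      (⟨cl ⊥, ms_cl_cl hcl ⊥⟩ : {x : S // cl x = x}) ≤ z :=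
    fun z => Subtype.coe_le_coe.mp (ms_bflat_le h hcl z.2)
  refine ⟨⟨⟨cl ⊥, ms_cl_cl hcl ⊥⟩, hbot⟩,
    fun x y hxy => h.M2 (Subtype.coe_le_coe.mpr hxy),
    fun x y hxy => ms_covBy_rho h hcl hxy, ?_, ?_⟩
  · -- (G1) every interval below a maximal flat is a geometric lattice
    intro m _
    -- canonical joins
    have hJ : ∀ x y : ↥(Set.Iic m), ∃ j0 : S, x.val.val ≤ j0 ∧ y.val.val ≤ j0 ∧
        j0 ∈ mub x.val.val y.val.val ∧
        (∀ z : ↥(Set.Iic m), x ≤ z → y ≤ z → cl j0 ≤ z.val.val) ∧ cl j0 ≤ m.val := by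
      intro x y
      obtain ⟨j0, h1, h2, h3, h4⟩ := ms_simp_lub h.simplicial
        (show x.val.val ≤ m.val from Subtype.coe_le_coe.mpr x.2)
        (show y.val.val ≤ m.val from Subtype.coe_le_coe.mpr y.2)
      have hmub : j0 ∈ mub x.val.val y.val.val :=
        ⟨h1, h2, fun v hv1 hv2 hvj => le_antisymm hvj (h4 v (le_trans hvj h3) hv1 hv2)⟩
      have hclm : cl j0 ≤ m.val := by
        have := ms_cl_mono h hcl h3; rwa [m.2] at this
      refine ⟨j0, h1, h2, hmub, ?_, hclm⟩
      intro z hxz hyz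
      have hz : j0 ≤ z.val.val := h4 z.val.val
        (Subtype.coe_le_coe.mpr z.2)
        (show x.val.val ≤ z.val.val from Subtype.coe_le_coe.mpr hxz)
        (show y.val.val ≤ z.val.val from Subtype.coe_le_coe.mpr hyz)
      have h5 := ms_cl_mono h hcl hz
      rwa [z.val.2] at h5
    -- canonical meets
    have hM : ∀ x y : ↥(Set.Iic m), ∃ l0 : S, cl l0 = l0 ∧
        l0 ≤ x.val.val ∧ l0 ≤ y.val.val ∧ l0 ∈ mlb x.val.val y.val.val ∧
        ∀ z : S, z ≤ x.val.val → z ≤ y.val.val → z ≤ l0 := by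
      intro x y
      obtain ⟨l0, h1, h2, h3⟩ := ms_simp_glb h.simplicial
        (show x.val.val ≤ m.val from Subtype.coe_le_coe.mpr x.2)
        (show y.val.val ≤ m.val from Subtype.coe_le_coe.mpr y.2)
      have hfl : cl l0 = l0 := by
        have hx := ms_cl_mono h hcl h1
        rw [x.val.2] at hx
        have hy := ms_cl_mono h hcl h2
        rw [y.val.2] at hy
        exact le_antisymm (h3 _ hx hy) (hcl l0).1
      exact ⟨l0, hfl, h1, h2,
        ⟨h1, h2, fun m' hm1 hm2 hlm => le_antisymm (h3 m' hm1 hm2) hlm⟩, h3⟩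
    refine ⟨⟨⟨⟨cl ⊥, ms_cl_cl hcl ⊥⟩, hbot m⟩,
      fun z => Subtype.coe_le_coe.mp (hbot z.val)⟩, ?_, ?_, ?_, ?_⟩
    · -- pairwise LUBs
      intro x y
      obtain ⟨j0, hj1, hj2, _, hjlub, hjm⟩ := hJ x y
      refine ⟨⟨⟨cl j0, ms_cl_cl hcl j0⟩, Subtype.coe_le_coe.mp hjm⟩, ?_, ?_⟩
      · rintro c (rfl | hc)
        · exact Subtype.coe_le_coe.mp
            (show c.val.val ≤ cl j0 from le_trans hj1 (hcl j0).1)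
        · rcases hc with rfl
          exact Subtype.coe_le_coe.mp
            (show c.val.val ≤ cl j0 from le_trans hj2 (hcl j0).1)
      · intro z hz
        have h1 : x ≤ z := hz (Set.mem_insert _ _)
        have h2 : y ≤ z := hz (Set.mem_insert_of_mem _ rfl)
        exact Subtype.coe_le_coe.mp (hjlub z h1 h2)
    · -- pairwise GLBs
      intro x y
      obtain ⟨l0, hfl, hl1, hl2, _, hlglb⟩ := hM x y
      have hlm : l0 ≤ m.val := le_trans hl1 (Subtype.coe_le_coe.mpr x.2)
      refine ⟨⟨⟨l0, hfl⟩, Subtype.coe_le_coe.mp hlm⟩, ?_, ?_⟩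
      · rintro c (rfl | hc)
        · exact Subtype.coe_le_coe.mp hl1
        · rcases hc with rfl
          exact Subtype.coe_le_coe.mp hl2
      · intro z hz
        have h1 : z ≤ x := hz (Set.mem_insert _ _)
        have h2 : z ≤ y := hz (Set.mem_insert_of_mem _ rfl)
        exact Subtype.coe_le_coe.mp (hlglb z.val.val
          (Subtype.coe_le_coe.mpr h1) (Subtype.coe_le_coe.mpr h2))
    · -- atomistic
      intro x
      constructor
      · rintro a ⟨-, ha2⟩
        exact ha2
      · intro z hz
        by_contra hxz
        obtain ⟨l0, hfl, hl1, hl2, -, hlglb⟩ := hM x z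
        have hne : l0 ≠ x.val.val := by
          intro he
          refine hxz (show x ≤ z from Subtype.coe_le_coe.mp (Subtype.coe_le_coe.mp ?_))
          rw [← he]
          exact hl2
        have hrlt : ρ l0 < ρ x.val.val := by
          rcases lt_or_ge (ρ l0) (ρ x.val.val) with h' | h'
          · exact h'
          · exact absurd (ms_flat_eq h hcl hfl hl1 h') (fun he => hne he.symm)
        obtain ⟨p, hp, hpx, hpw, -⟩ := h.M5 l0 x.val.val hrlt
        have hrp : ρ p = 1 := by
          rcases Nat.le_one_iff_eq_zero_or_eq_one.mp (ms_rho_atom h hp) with h0 | h1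
          · have : p ≤ cl (⊥ : S) := (hcl ⊥).2.2 p bot_le (by rw [h0, ms_rho_bot h])
            exact absurd (le_trans this (ms_bflat_le h hcl hfl)) hpw
          · exact h1
        have hclpx : cl p ≤ x.val.val := by
          have := ms_cl_mono h hcl hpx
          rwa [x.val.2] at this
        have ham : cl p ≤ m.val := le_trans hclpx (Subtype.coe_le_coe.mpr x.2)
        have hrcp : ρ (cl p) = 1 := by rw [(hcl p).2.1, hrp]
        have haA : OrdAtom (⟨⟨cl p, ms_cl_cl hcl p⟩,
            Subtype.coe_le_coe.mp ham⟩ : ↥(Set.Iic m)) := by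
          refine ⟨⟨⟨cl ⊥, ms_cl_cl hcl ⊥⟩, hbot m⟩,
            fun z' => Subtype.coe_le_coe.mp (hbot z'.val), ?_⟩
          exact ms_cov_mk (ms_rank1_covby h hcl (ms_cl_cl hcl p) hrcp)
        have hle := hz ⟨haA, show _ ≤ x from Subtype.coe_le_coe.mp hclpx⟩
        have hpz : p ≤ z.val.val :=
          le_trans (hcl p).1 (Subtype.coe_le_coe.mpr hle)
        exact hpw (hlglb p hpx hpz)
    · -- semimodularity
      intro x y mm j hglb hlub hcov
      obtain ⟨j0, hj1, hj2, hjmub, hjlub, hjm⟩ := hJ x y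
      obtain ⟨l0, hfl, hl1, hl2, hlmlb, hlglb⟩ := hM x y
      have hlm : l0 ≤ m.val := le_trans hl1 (Subtype.coe_le_coe.mpr x.2)
      -- identify j and mm with the canonical ones
      have hJlub : IsLUB {x, y}
          (⟨⟨cl j0, ms_cl_cl hcl j0⟩, Subtype.coe_le_coe.mp hjm⟩ : ↥(Set.Iic m)) := by
        constructor
        · rintro c (rfl | hc)
          · exact Subtype.coe_le_coe.mp
              (show c.val.val ≤ cl j0 from le_trans hj1 (hcl j0).1)
          · rcases hc with rfl
            exact Subtype.coe_le_coe.mp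
              (show c.val.val ≤ cl j0 from le_trans hj2 (hcl j0).1)
        · intro z hz
          exact Subtype.coe_le_coe.mp (hjlub z (hz (Set.mem_insert _ _))
            (hz (Set.mem_insert_of_mem _ rfl)))
      have hMglb : IsGLB {x, y}
          (⟨⟨l0, hfl⟩, Subtype.coe_le_coe.mp hlm⟩ : ↥(Set.Iic m)) := by
        constructor
        · rintro c (rfl | hc)
          · exact Subtype.coe_le_coe.mp hl1
          · rcases hc with rfl
            exact Subtype.coe_le_coe.mp hl2
        · intro z hz
          exact Subtype.coe_le_coe.mp (hlglb z.val.val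
            (Subtype.coe_le_coe.mpr (hz (Set.mem_insert _ _)))
            (Subtype.coe_le_coe.mpr (hz (Set.mem_insert_of_mem _ rfl))))
      have hjc := hlub.unique hJlub
      have hmc := hglb.unique hMglb
      -- ranks
      have hrx : ρ x.val.val = ρ l0 + 1 := by
        have hcovF : mm.val ⋖ x.val := ms_cov_lift hcov
        have := ms_covBy_rho h hcl hcovF
        rw [hmc] at this
        exact this
      have hsub := h.M3 x.val.val y.val.val j0 l0 hjmub hlmlb
      have hylt : ρ y.val.val < ρ (cl j0) := by
        rcases lt_or_ge (ρ y.val.val) (ρ (cl j0)) with h' | h'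
        · exact h'
        · exfalso
          have heq : cl j0 = y.val.val :=
            ms_flat_eq h hcl y.val.2 (le_trans hj2 (hcl j0).1) h'
          have hxy : x ≤ y := Subtype.coe_le_coe.mp
            (show x.val.val ≤ y.val.val from heq ▸ le_trans hj1 (hcl j0).1)
          have : x ≤ mm := hglb.2 (by
            rintro c (rfl | hc)
            · exact le_rfl
            · rcases hc with rfl; exact hxy)
          exact absurd this (not_le_of_gt hcov.lt)
      have hrj : ρ (cl j0) = ρ y.val.val + 1 := by
        have h1 : ρ (cl j0) = ρ j0 := (hcl j0).2.1
        omega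
      -- y covers j
      have hyj : y < j := by
        refine lt_of_le_of_ne (hlub.1 (Set.mem_insert_of_mem _ rfl)) ?_
        intro he
        have hvv : y.val.val = cl j0 := by rw [he, hjc]
        rw [hvv] at hrj
        omega
      refine ⟨hyj, ?_⟩
      intro c h1 h2
      have h1' : y.val.val < c.val.val :=
        Subtype.coe_lt_coe.mpr (Subtype.coe_lt_coe.mpr h1)
      have h2' : c.val.val < j.val.val :=
        Subtype.coe_lt_coe.mpr (Subtype.coe_lt_coe.mpr h2)
      have hc1 : ρ y.val.val < ρ c.val.val := by
        rcases lt_or_ge (ρ y.val.val) (ρ c.val.val) with h' | h'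
        · exact h'
        · exact absurd (ms_flat_eq h hcl y.val.2 h1'.le h') h1'.ne'
      have hc2 : ρ c.val.val < ρ j.val.val := by
        rcases lt_or_ge (ρ c.val.val) (ρ j.val.val) with h' | h'
        · exact h'
        · exact absurd (ms_flat_eq h hcl c.val.2 h2'.le h') h2'.ne'
      have hc2' : ρ c.val.val < ρ (cl j0) := by
        rw [hjc] at hc2
        exact hc2
      omega
  · -- (G2)
    intro x A hA y hy hr hcard
    have hA1 : ∀ a : A, ρ a.val.val = 1 := by
      intro a
      obtain ⟨bb, hbb, hbcov⟩ := hA a.val a.2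
      have hbb' : bb = ⟨cl ⊥, ms_cl_cl hcl ⊥⟩ := le_antisymm (hbb _) (hbot bb)
      have hcr := ms_covBy_rho h hcl hbcov
      rw [hbb'] at hcr
      rw [hcr, ms_rho_bflat h hcl]
    have hpa : ∀ a : A, ∃ p, IsAtom p ∧ p ≤ a.val.val ∧ cl p = a.val.val :=
      fun a => ms_exists_atom_cl h hcl a.val.2 (hA1 a)
    choose p hp1 hp2 hp3 using hpa
    obtain ⟨e⟩ := h.simplicial y.val
    have hpy : ∀ a : A, p a ≤ y.val :=
      fun a => le_trans (hp2 a) (Subtype.coe_le_coe.mpr (hy.1 a.val a.2))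
    have hta : ∀ a : A, ∃ t, e ⟨p a, hpy a⟩ = {t} :=
      fun a => ms_iso_atom e (hp1 a) (hpy a)
    choose t ht using hta
    set j : Set.Iic y.val := e.symm (Set.range t) with hj
    have hpj : ∀ a : A, p a ≤ j.val := by
      intro a
      have h1 : ({t a} : Set _) ⊆ Set.range t := Set.singleton_subset_iff.mpr ⟨a, rfl⟩
      have h2 := e.symm.monotone h1
      rw [← ht a, e.symm_apply_apply] at h2
      exact h2
    have hclj : cl j.val = y.val := by
      have hle : cl j.val ≤ y.val := by
        have := ms_cl_mono h hcl j.2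
        rwa [y.2] at this
      have hub : ∀ a ∈ A, a ≤ (⟨cl j.val, ms_cl_cl hcl j.val⟩ : {x : S // cl x = x}) := by
        intro a ha
        have h1 : cl (p ⟨a, ha⟩) ≤ cl j.val := ms_cl_mono h hcl (hpj ⟨a, ha⟩)
        rw [hp3 ⟨a, ha⟩] at h1
        exact Subtype.coe_le_coe.mp h1
      have := hy.2 ⟨cl j.val, ms_cl_cl hcl j.val⟩ hub (Subtype.coe_le_coe.mp hle)
      exact congrArg Subtype.val this
    have hrj : ρ x.val < ρ j.val := by
      have h1 : ρ j.val = ρ y.val := by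
        have h2 := (hcl j.val).2.1
        rw [hclj] at h2
        exact h2.symm
      omega
    obtain ⟨q, hq, hqj, hqx, u, hu⟩ := h.M5 x.val j.val hrj
    have hqy : q ≤ y.val := le_trans hqj j.2
    obtain ⟨tq, htq⟩ := ms_iso_atom e hq hqy
    have hsub : e ⟨q, hqy⟩ ⊆ Set.range t := by
      have h1 : (⟨q, hqy⟩ : Set.Iic y.val) ≤ j := hqj
      have h2 := e.monotone h1
      rwa [hj, e.apply_symm_apply] at h2
    have htq2 : tq ∈ Set.range t := hsub (by rw [htq]; exact rfl)
    obtain ⟨a, hta2⟩ := htq2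
    have hqp : q = p a := by
      have h1 : e ⟨q, hqy⟩ = e ⟨p a, hpy a⟩ := by rw [htq, ht a, hta2]
      exact congrArg Subtype.val (e.injective h1)
    refine ⟨a.val, a.2, ?_, ⟨cl u, ms_cl_cl hcl u⟩, ?_, ?_⟩
    · intro hax
      exact hqx (hqp ▸ le_trans (hp2 a) (Subtype.coe_le_coe.mpr hax))
    · exact Subtype.coe_le_coe.mp (le_trans hu.1 (hcl u).1)
    · have h1 : cl q ≤ cl u := ms_cl_mono h hcl hu.2.1
      rw [hqp, hp3 a] at h1
      exact Subtype.coe_le_coe.mp h1
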